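/- Let α be a real number and let n ≥ 1 be an integer. Then n! · Σ_{k=0}^{n-1} (-1)^k · ((-α)_k / k!) / (n-k) = Σ_{k=0}^{n-1} (k+1)·𝐬(n,k+1)·α^k, where 𝐬(n,k+1) are unsigned Stirling numbers of the first kind (with the convention 0^0 = 1 when α = 0). -/

import Mathlib

/-- Signed Stirling numbers of the first kind `s(n, k)`. -/
def stirling1 : ℕ → ℕ → ℤ
  | 0, 0 => 1
  | 0, _ + 1 => 0
  | n + 1, 0 => -(n : ℤ) * stirling1 n 0
  | n + 1, k + 1 => stirling1 n k - (n : ℤ) * stirling1 n (k + 1)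

/-- Falling factorial `(β)_i = β (β-1) ⋯ (β-i+1)`, with `(β)_0 = 1`. -/
noncomputable def fall (β : ℝ) (i : ℕ) : ℝ := ∏ j ∈ Finset.range i, (β - j)

/-- Unsigned Stirling numbers of the first kind. -/
def us : ℕ → ℕ → ℕ
  | 0, 0 => 1
  | 0, _ + 1 => 0
  | n + 1, 0 => n * us n 0
  | n + 1, k + 1 => us n k + n * us n (k + 1)

lemma us_eq_zero : ∀ n k : ℕ, n < k → us n k = 0
  | 0, 0, h => absurd h (by omega)
  | 0, _ + 1, _ => rfl
  | n + 1, 0, h => absurd h (by omega)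
  | n + 1, k + 1, h => by
      rw [us, us_eq_zero n k (by omega), us_eq_zero n (k+1) (by omega)]
      simp

lemma stirling1_eq : ∀ n k : ℕ, stirling1 n k = (-1 : ℤ) ^ (n + k) * us n k
  | 0, 0 => rfl
  | 0, k + 1 => by simp [stirling1, us]
  | n + 1, 0 => by
      rw [stirling1, us, stirling1_eq n 0]
      push_cast
      ring
  | n + 1, k + 1 => by
      rw [stirling1, us, stirling1_eq n k, stirling1_eq n (k+1)]
      push_cast
      ring

lemma abs_stirling1 (n k : ℕ) : |stirling1 n k| = (us n k : ℤ) := by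
  rw [stirling1_eq]
  simp [abs_mul, abs_pow]

/-- Rising factorial. -/
noncomputable def rf (α : ℝ) (n : ℕ) : ℝ := ∏ j ∈ Finset.range n, (α + j)

lemma rf_zero (α : ℝ) : rf α 0 = 1 := rfl

lemma rf_succ (α : ℝ) (n : ℕ) : rf α (n + 1) = rf α n * (α + n) :=
  Finset.prod_range_succ _ _

lemma fall_neg (α : ℝ) (k : ℕ) : (-1 : ℝ) ^ k * fall (-α) k = rf α k := by
  induction k with
  | zero => simp [fall, rf]
  | succ k ih =>
      rw [fall, Finset.prod_range_succ, rf_succ, ← ih, fall]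
      push_cast
      ring

lemma rf_eq_sum (α : ℝ) (n : ℕ) :
    rf α n = ∑ k ∈ Finset.range (n + 1), (us n k : ℝ) * α ^ k := by
  induction n with
  | zero => simp [rf, us]
  | succ n ih =>
      rw [rf_succ, ih]
      rw [Finset.sum_range_succ' (fun k => (us (n+1) k : ℝ) * α ^ k) (n+1)]
      have h1 : ∀ k ∈ Finset.range (n + 1),
          (us (n+1) (k+1) : ℝ) * α ^ (k+1)
          = (us n k : ℝ) * α ^ k * α + (n : ℝ) * ((us n (k+1) : ℝ) * α ^ (k+1)) := by
        intro k _
        rw [show us (n+1) (k+1) = us n k + n * us n (k+1) from rfl]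
        push_cast
        ring
      rw [Finset.sum_congr rfl h1, Finset.sum_add_distrib]
      rw [show us (n+1) 0 = n * us n 0 from rfl]
      rw [← Finset.mul_sum]
      have h3 : (∑ k ∈ Finset.range (n + 1), (us n k : ℝ) * α ^ k) * (α + n)
          = (∑ k ∈ Finset.range (n + 1), (us n k : ℝ) * α ^ k * α)
            + (n : ℝ) * (∑ k ∈ Finset.range (n + 1), (us n k : ℝ) * α ^ k) := by
        rw [← Finset.sum_mul]
        ring
      rw [h3]
      have h4 : ∑ k ∈ Finset.range (n + 1), (us n k : ℝ) * α ^ k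
          = (∑ k ∈ Finset.range n, (us n (k+1) : ℝ) * α ^ (k+1)) + (us n 0 : ℝ) * α ^ 0 :=
        Finset.sum_range_succ' _ n
      have h5 : ∑ k ∈ Finset.range (n + 1), (us n (k+1) : ℝ) * α ^ (k+1)
          = (∑ k ∈ Finset.range n, (us n (k+1) : ℝ) * α ^ (k+1))
            + (us n (n+1) : ℝ) * α ^ (n+1) := Finset.sum_range_succ _ _
      rw [h5, us_eq_zero n (n+1) (by omega)]
      conv_lhs => rw [h4]
      push_cast
      ring

def cc (n k : ℕ) : ℕ := n.choose k * (n - 1 - k).factorial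

lemma factorial_eq_cc (n k : ℕ) (h : k < n) :
    n.factorial = cc n k * (k.factorial * (n - k)) := by
  have h1 := Nat.choose_mul_factorial_mul_factorial (le_of_lt h)
  have h2 : (n - k).factorial = (n - k) * (n - 1 - k).factorial := by
    have h3 : n - k = (n - 1 - k) + 1 := by omega
    rw [h3, Nat.factorial_succ, ← h3]
  rw [← h1, h2, cc]
  ring

noncomputable def Af (α : ℝ) (n : ℕ) : ℝ := ∑ k ∈ Finset.range n, (cc n k : ℝ) * rf α k
noncomputable def Bf (α : ℝ) (n : ℕ) : ℝ :=
  ∑ k ∈ Finset.range n, ((k : ℝ) + 1) * (us n (k + 1) : ℝ) * α ^ k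

lemma cc_mid (m k : ℕ) (h : k < m) :
    cc (m+2) (k+1) = cc (m+1) k + (m - k) * cc (m+1) (k+1) := by
  have e1 : cc (m+2) (k+1) = (m+2).choose (k+1) * (m - k).factorial := by
    rw [cc]; congr 2 <;> omega
  have e2 : cc (m+1) k = (m+1).choose k * (m - k).factorial := by
    rw [cc]; congr 2 <;> omega
  have e3 : cc (m+1) (k+1) = (m+1).choose (k+1) * (m - k - 1).factorial := by
    rw [cc]; congr 2 <;> omega
  have e4 : (m - k).factorial = (m - k) * (m - k - 1).factorial := by
    have h3 : m - k = (m - k - 1) + 1 := by omega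
    rw [h3, Nat.factorial_succ, ← h3]
  rw [e1, e2, e3, Nat.choose_succ_succ, e4]
  ring

lemma cc_zero (m : ℕ) : cc (m+2) 0 = (m+1) * cc (m+1) 0 := by
  simp [cc, Nat.factorial_succ]

lemma cc_top (m : ℕ) : cc (m+2) (m+1) = cc (m+1) m + 1 := by
  simp [cc, Nat.choose_succ_self_right]

lemma A_rec (α : ℝ) (m : ℕ) :
    Af α (m+2) = (α + ((m+1 : ℕ) : ℝ)) * Af α (m+1) + rf α (m+1) := by
  have key : ∀ k ∈ Finset.range (m+1),
      (α + ((m+1 : ℕ) : ℝ)) * ((cc (m+1) k : ℝ) * rf α k)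
      = (cc (m+1) k : ℝ) * rf α (k+1) + ((m+1-k : ℕ) : ℝ) * (cc (m+1) k : ℝ) * rf α k := by
    intro k hk
    rw [Finset.mem_range] at hk
    rw [rf_succ]
    have hc : ((m+1-k : ℕ) : ℝ) = ((m+1 : ℕ) : ℝ) - (k : ℝ) := by
      rw [Nat.cast_sub (by omega : k ≤ m+1)]
    rw [hc]
    ring
  have rhs_eq : (α + ((m+1 : ℕ) : ℝ)) * Af α (m+1)
      = (∑ k ∈ Finset.range (m+1), (cc (m+1) k : ℝ) * rf α (k+1))
        + (∑ k ∈ Finset.range (m+1), ((m+1-k : ℕ) : ℝ) * (cc (m+1) k : ℝ) * rf α k) := by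
    rw [Af, Finset.mul_sum, Finset.sum_congr rfl key, Finset.sum_add_distrib]
  rw [rhs_eq]
  rw [Finset.sum_range_succ (fun k => (cc (m+1) k : ℝ) * rf α (k+1)) m]
  rw [Finset.sum_range_succ' (fun k => ((m+1-k : ℕ) : ℝ) * (cc (m+1) k : ℝ) * rf α k) m]
  rw [Af, Finset.sum_range_succ' (fun k => (cc (m+2) k : ℝ) * rf α k) (m+1),
      Finset.sum_range_succ (fun k => (cc (m+2) (k+1) : ℝ) * rf α (k+1)) m]
  have hmid : ∑ k ∈ Finset.range m, (cc (m+2) (k+1) : ℝ) * rf α (k+1)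
      = ∑ k ∈ Finset.range m, ((cc (m+1) k : ℝ) * rf α (k+1)
          + ((m+1-(k+1) : ℕ) : ℝ) * (cc (m+1) (k+1) : ℝ) * rf α (k+1)) := by
    refine Finset.sum_congr rfl fun k hk => ?_
    rw [Finset.mem_range] at hk
    rw [cc_mid m k hk]
    rw [show m + 1 - (k+1) = m - k from by omega]
    push_cast
    ring
  rw [hmid, Finset.sum_add_distrib, cc_top, cc_zero]
  rw [show m + 1 - 0 = m + 1 from rfl, rf_zero]
  push_cast
  ring

lemma B_rec (α : ℝ) (n : ℕ) :
    Bf α (n+1) = (α + (n : ℝ)) * Bf α n + rf α n := by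
  have h1 : ∀ k ∈ Finset.range (n+1),
      ((k : ℝ) + 1) * (us (n+1) (k+1) : ℝ) * α ^ k
      = (((k : ℝ) + 1) * (us n k : ℝ) * α ^ k)
        + (n : ℝ) * (((k : ℝ) + 1) * (us n (k+1) : ℝ) * α ^ k) := by
    intro k _
    rw [show us (n+1) (k+1) = us n k + n * us n (k+1) from rfl]
    push_cast
    ring
  rw [Bf, Finset.sum_congr rfl h1, Finset.sum_add_distrib, ← Finset.mul_sum]
  have h2 : ∑ k ∈ Finset.range (n+1), ((k : ℝ) + 1) * (us n (k+1) : ℝ) * α ^ k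
      = Bf α n := by
    rw [Bf, Finset.sum_range_succ, us_eq_zero n (n+1) (by omega)]
    simp
  rw [h2]
  have h3 : ∑ k ∈ Finset.range (n+1), ((k : ℝ) + 1) * (us n k : ℝ) * α ^ k
      = (∑ k ∈ Finset.range (n+1), (k : ℝ) * (us n k : ℝ) * α ^ k)
        + (∑ k ∈ Finset.range (n+1), (us n k : ℝ) * α ^ k) := by
    rw [← Finset.sum_add_distrib]
    exact Finset.sum_congr rfl fun k _ => by ring
  rw [h3, ← rf_eq_sum]
  have h4 : ∑ k ∈ Finset.range (n+1), (k : ℝ) * (us n k : ℝ) * α ^ k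
      = α * Bf α n := by
    rw [Finset.sum_range_succ' (fun k => (k : ℝ) * (us n k : ℝ) * α ^ k) n]
    rw [Bf, Finset.mul_sum]
    simp only [Nat.cast_zero, zero_mul, add_zero, Nat.cast_add, Nat.cast_one]
    refine Finset.sum_congr rfl fun k _ => by push_cast; ring
  rw [h4]
  ring

lemma AB (α : ℝ) (m : ℕ) : Af α (m+1) = Bf α (m+1) := by
  induction m with
  | zero =>
      show (∑ k ∈ Finset.range 1, (cc 1 k : ℝ) * rf α k)
        = ∑ k ∈ Finset.range 1, ((k : ℝ) + 1) * (us 1 (k+1) : ℝ) * α ^ k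
      simp [cc, us, rf]
  | succ m ih =>
      rw [A_rec, B_rec, ih]

theorem sum_identity (α : ℝ) (n : ℕ) (hn : 1 ≤ n) :
    (n.factorial : ℝ) * ∑ k ∈ Finset.range n,
        (-1 : ℝ) ^ k * (fall (-α) k / k.factorial) / ((n : ℝ) - k) =
      ∑ k ∈ Finset.range n, ((k : ℝ) + 1) * (|stirling1 n (k + 1)| : ℝ) * α ^ k := by
  have hL : (n.factorial : ℝ) * ∑ k ∈ Finset.range n,
      (-1 : ℝ) ^ k * (fall (-α) k / k.factorial) / ((n : ℝ) - k) = Af α n := by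
    rw [Finset.mul_sum, Af]
    refine Finset.sum_congr rfl fun k hk => ?_
    rw [Finset.mem_range] at hk
    have hnk : ((n : ℝ) - k) = ((n - k : ℕ) : ℝ) := by
      rw [Nat.cast_sub (le_of_lt hk)]
    have hknz : ((k.factorial : ℝ)) ≠ 0 := by positivity
    have hnknz : (((n - k : ℕ) : ℕ) : ℝ) ≠ 0 := by
      have : 0 < n - k := by omega
      positivity
    rw [hnk, ← fall_neg α k]
    rw [factorial_eq_cc n k hk]
    push_cast
    field_simp
  have hR : ∑ k ∈ Finset.range n, ((k : ℝ) + 1) * (|stirling1 n (k + 1)| : ℝ) * α ^ k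
      = Bf α n := by
    rw [Bf]
    refine Finset.sum_congr rfl fun k _ => ?_
    rw [← Int.cast_abs, abs_stirling1]
    push_cast
    ring
  rw [hL, hR]
  obtain ⟨m, rfl⟩ : ∃ m, n = m + 1 := ⟨n - 1, by omega⟩
  exact AB α m
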